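/- arXiv:2401.00437 — 2 statements merged into one kernel-verified Lean document; each statement's English description precedes it below -/
import Mathlib

section
/- Holding the average individual squared error fixed, the ensemble error decreases strictly as variance increases: if two score families S and T with common mean errors satisfy (1/N)∑(s_i - y)² = (1/N)∑(t_i - y)² and Var(S) < Var(T), then (s̄ - y)² > (t̄ - y)². -/
lemma decomp (N : ℕ) (hN : 0 < N) (s : Fin N → ℝ) (y sbar : ℝ)
    (hsbar : sbar = (1 / N) * ∑ i, s i) :
    (1 / N : ℝ) * ∑ i, (s i - y) ^ 2 =
      (1 / N) * ∑ i, (s i - sbar) ^ 2 + (sbar - y) ^ 2 := by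
  have hNne : (N : ℝ) ≠ 0 := Nat.cast_ne_zero.mpr hN.ne'
  have hsum : ∑ i, s i = N * sbar := by
    rw [hsbar]; field_simp
  have h1 : ∀ i : Fin N, (s i - y) ^ 2 =
      (s i - sbar) ^ 2 + 2 * (sbar - y) * s i - 2 * (sbar - y) * sbar + (sbar - y) ^ 2 := by
    intro i; ring
  simp only [h1]
  rw [Finset.sum_add_distrib, Finset.sum_sub_distrib, Finset.sum_add_distrib,
    ← Finset.mul_sum, hsum, Finset.sum_const, Finset.card_univ, Fintype.card_fin,
    nsmul_eq_mul]
  field_simp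
  simp only [Finset.sum_const, Finset.card_univ, Fintype.card_fin, nsmul_eq_mul]
  ring_nf
  rw [Finset.sum_congr rfl (fun x _ => (by ring : -(s x * sbar * 2) + s x ^ 2 + sbar ^ 2 = -(sbar * s x * 2) + sbar ^ 2 + s x ^ 2))]
  ring

theorem more_variance_less_ensemble_error (N : ℕ) (hN : 0 < N)
    (s t : Fin N → ℝ) (y : ℝ) (sbar tbar : ℝ)
    (hsbar : sbar = (1 / N) * ∑ i, s i) (htbar : tbar = (1 / N) * ∑ i, t i)
    (herr : (1 / N) * ∑ i, (s i - y) ^ 2 = (1 / N) * ∑ i, (t i - y) ^ 2)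
    (hvar : (1 / N) * ∑ i, (s i - sbar) ^ 2 < (1 / N) * ∑ i, (t i - tbar) ^ 2) :
    (sbar - y) ^ 2 > (tbar - y) ^ 2 := by
  have hs := decomp N hN s y sbar hsbar
  have ht := decomp N hN t y tbar htbar
  rw [hs, ht] at herr
  linarith
end

section
/- For any permutation σ of {1,...,n}, ∑_{i=1}^n (σ(i) - i)² ≤ n(n²-1)/3, with equality for the reversal permutation σ(i) = n+1-i. -/
open Finset

lemma sum_range_sq_real (n : ℕ) :
    ∑ i ∈ Finset.range n, ((i : ℝ)) ^ 2 = n * (n - 1) * (2 * n - 1) / 6 := by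
  induction n with
  | zero => simp
  | succ m ih =>
    rw [Finset.sum_range_succ, ih]
    push_cast
    ring

lemma sum_range_id_real (n : ℕ) :
    ∑ i ∈ Finset.range n, ((i : ℝ)) = n * (n - 1) / 2 := by
  induction n with
  | zero => simp
  | succ m ih =>
    rw [Finset.sum_range_succ, ih]
    push_cast
    ring

lemma rev_sum_eq (n : ℕ) (hn : 0 < n) :
    ∑ i : Fin n, (((Fin.rev i : ℕ) : ℝ) - ((i : ℕ) : ℝ)) ^ 2 =
      n * ((n : ℝ) ^ 2 - 1) / 3 := by
  have h1 : ∀ i : Fin n, (((Fin.rev i : ℕ) : ℝ) - ((i : ℕ) : ℝ)) ^ 2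
      = ((n : ℝ) - 1) ^ 2 - 4 * ((n : ℝ) - 1) * (i : ℕ) + 4 * ((i : ℕ) : ℝ) ^ 2 := by
    intro i
    have : ((Fin.rev i : ℕ) : ℝ) = (n : ℝ) - 1 - (i : ℕ) := by
      rw [Fin.val_rev]
      have hi : (i : ℕ) + 1 ≤ n := i.isLt
      push_cast [Nat.cast_sub hi]
      ring
    rw [this]; ring
  simp_rw [h1]
  rw [Finset.sum_add_distrib, Finset.sum_sub_distrib, Finset.sum_const,
    ← Finset.mul_sum, ← Finset.mul_sum, Fin.sum_univ_eq_sum_range (fun i => ((i : ℝ)) ^ 2),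
    Fin.sum_univ_eq_sum_range (fun i => ((i : ℝ))), sum_range_sq_real, sum_range_id_real]
  simp only [Finset.card_univ, Fintype.card_fin, nsmul_eq_mul]
  have : (1 : ℝ) ≤ n := by exact_mod_cast hn
  ring

theorem perm_displacement_bound (n : ℕ) (hn : 0 < n) :
    (∀ σ : Equiv.Perm (Fin n),
      ∑ i, (((σ i : ℕ) : ℝ) - ((i : ℕ) : ℝ)) ^ 2 ≤ n * ((n : ℝ) ^ 2 - 1) / 3) ∧
    ∑ i : Fin n, (((Fin.rev i : ℕ) : ℝ) - ((i : ℕ) : ℝ)) ^ 2 =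
      n * ((n : ℝ) ^ 2 - 1) / 3 := by
  refine ⟨?_, rev_sum_eq n hn⟩
  intro σ
  rw [← rev_sum_eq n hn]
  set f : Fin n → ℝ := fun i => ((i : ℕ) : ℝ) with hf
  have hcomp : ∑ i, f (σ i) ^ 2 = ∑ i, f i ^ 2 :=
    Equiv.sum_comp σ (fun i => f i ^ 2)
  have expand : ∀ τ : Fin n → Fin n, ∀ i, (f (τ i) - f i) ^ 2
      = f (τ i) ^ 2 + f i ^ 2 - 2 * (f i * f (τ i)) := by intro τ i; ring
  have antiv : Antivary f (fun i => f (Fin.rev i)) := by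
    intro i j hij
    have h1 : ((Fin.rev i : ℕ) : ℝ) < ((Fin.rev j : ℕ) : ℝ) := hij
    have h2 : Fin.rev i < Fin.rev j := by
      have : (Fin.rev i : ℕ) < (Fin.rev j : ℕ) := by exact_mod_cast h1
      exact this
    have h3 : j < i := Fin.rev_lt_rev.mp h2
    exact Nat.cast_le.mpr (Nat.le_of_lt h3)
  have key : ∑ i, f i * f (Fin.rev i) ≤ ∑ i, f i * f (σ i) := by
    have := antiv.sum_mul_le_sum_mul_comp_perm (σ := σ.trans Fin.revPerm)
    simpa [Function.comp] using this
  have hrevcomp : ∑ i, f (Fin.rev i) ^ 2 = ∑ i, f i ^ 2 :=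
    Equiv.sum_comp Fin.revPerm (fun i => f i ^ 2)
  calc ∑ i, (f (σ i) - f i) ^ 2
      = ∑ i, (f (σ i) ^ 2 + f i ^ 2 - 2 * (f i * f (σ i))) := by
        simp_rw [expand σ]
    _ = ∑ i, f i ^ 2 + ∑ i, f i ^ 2 - 2 * ∑ i, f i * f (σ i) := by
        rw [Finset.sum_sub_distrib, Finset.sum_add_distrib, hcomp, ← Finset.mul_sum]
    _ ≤ ∑ i, f i ^ 2 + ∑ i, f i ^ 2 - 2 * ∑ i, f i * f (Fin.rev i) := by linarith
    _ = ∑ i, (f (Fin.rev i) - f i) ^ 2 := by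
        have : ∑ i, (f (Fin.rev i) - f i) ^ 2
            = ∑ i, f i ^ 2 + ∑ i, f i ^ 2 - 2 * ∑ i, f i * f (Fin.rev i) := by
          simp_rw [expand Fin.rev]
          rw [Finset.sum_sub_distrib, Finset.sum_add_distrib, hrevcomp, ← Finset.mul_sum]
        rw [this]
end
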